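/- Let (R, 𝔪) be a commutative local ring with unity which is zero dimensional (every prime ideal of R is maximal) and has finite residue field R/𝔪. Then the group of units R* is a torsion group: for every unit u of R there exists a positive integer n with uⁿ = 1. -/

import Mathlib

open IsLocalRing

/-- Key: if `a ∈ I` and `(p : R) ∈ I` with `p` prime, then `(1+a)^(p^e) ∈ 1 + I^(e+1)`. -/
lemma key_pow {R : Type*} [CommRing R] {p : ℕ} (hp : p.Prime) {a : R} {I : Ideal R}
    (ha : a ∈ I) (hpI : (p : R) ∈ I) :
    ∀ e : ℕ, ∃ b ∈ I ^ (e + 1), (1 + a) ^ p ^ e = 1 + b := by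
  intro e
  induction e with
  | zero => exact ⟨a, by simpa using ha, by simp⟩
  | succ e ih =>
    obtain ⟨b, hb, hab⟩ := ih
    have h1 : (1 + a) ^ p ^ (e + 1) = (1 + b) ^ p := by
      rw [pow_succ, pow_mul, hab]
    rw [add_pow_prime_eq hp 1 b] at h1
    refine ⟨b ^ p + p * ∑ k ∈ Finset.Ioo 0 p, 1 ^ k * b ^ (p - k) * ↑(p.choose k / p),
      ?_, by
        have hs : ∑ k ∈ Finset.Ioo 0 p, 1 ^ k * b ^ (p - k) * ((p.choose k / p : ℕ) : R) =
            b * ∑ k ∈ Finset.Ioo 0 p, 1 ^ (k - 1) * b ^ (p - k - 1) * ((p.choose k / p : ℕ) : R) := by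
          rw [Finset.mul_sum]
          apply Finset.sum_congr rfl
          intro k hk
          rw [Finset.mem_Ioo] at hk
          simp only [one_pow, one_mul]
          rw [← mul_assoc, ← pow_succ']
          congr 2
          omega
        rw [hs, h1]; ring⟩
    apply Ideal.add_mem
    · have : b ^ p ∈ (I ^ (e + 1)) ^ p := Ideal.pow_mem_pow hb p
      rw [← pow_mul] at this
      refine Ideal.pow_le_pow_right ?_ this
      have := hp.two_le
      nlinarith
    · have hsum : (∑ k ∈ Finset.Ioo 0 p, 1 ^ k * b ^ (p - k) * ↑(p.choose k / p))
          ∈ I ^ (e + 1) := by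
        apply Ideal.sum_mem
        intro k hk
        rw [Finset.mem_Ioo] at hk
        have : b ^ (p - k) ∈ I ^ (e + 1) := by
          have heq : b ^ (p - k) = b ^ (p - k - 1) * b := by
            rw [← pow_succ]; congr 1; omega
          rw [heq]; exact Ideal.mul_mem_left _ _ hb
        rw [one_pow]
        exact Ideal.mul_mem_right _ _ (Ideal.mul_mem_left _ _ this)
      have : (p : R) * (∑ k ∈ Finset.Ioo 0 p, 1 ^ k * b ^ (p - k) * ↑(p.choose k / p))
          ∈ I * I ^ (e + 1) := Ideal.mul_mem_mul hpI hsum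
      rwa [← pow_succ'] at this

theorem stmt_5 {R : Type*} [CommRing R] [IsLocalRing R]
    (hdim : ∀ P : Ideal R, P.IsPrime → P.IsMaximal)
    (hres : Finite (IsLocalRing.ResidueField R)) :
    ∀ u : Rˣ, ∃ n : ℕ, 0 < n ∧ u ^ n = 1 := by
  intro u
  -- maximal ideal is contained in the nilradical
  have hmn : maximalIdeal R ≤ nilradical R := by
    rw [nilradical_eq_sInf]
    refine le_sInf ?_
    rintro P hP
    exact le_of_eq (IsLocalRing.eq_maximalIdeal (hdim P hP)).symm
  -- the residue field is a finite field; its characteristic p is prime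
  set K := ResidueField R
  obtain ⟨p, hpK⟩ := CharP.exists K
  have hp : p.Prime := CharP.char_is_prime K p
  -- the image of u in Kˣ has finite order
  have : Finite Kˣ := inferInstance
  set w : Kˣ := Units.map (residue R) u
  obtain ⟨m, hm, hwm⟩ : ∃ m : ℕ, 0 < m ∧ w ^ m = 1 :=
    ⟨orderOf w, orderOf_pos w, pow_orderOf_eq_one w⟩
  -- a := u^m - 1 ∈ 𝔪
  set a : R := (u : R) ^ m - 1 with ha_def
  have ha : a ∈ maximalIdeal R := by
    have : residue R ((u : R) ^ m - 1) = 0 := by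
      have : residue R ((u : R) ^ m) = 1 := by
        have := congrArg (Units.val) hwm
        simpa [w, Units.val_pow_eq_pow_val] using this
      rw [map_sub, this, map_one, sub_self]
    rwa [← Ideal.Quotient.eq_zero_iff_mem]
  -- p ∈ 𝔪
  have hpm : (p : R) ∈ maximalIdeal R := by
    have : residue R (p : R) = 0 := by
      rw [map_natCast]; exact CharP.cast_eq_zero K p
    rwa [← Ideal.Quotient.eq_zero_iff_mem]
  -- the ideal I = span {p, a} is nilpotent
  set I : Ideal R := Ideal.span {(p : R), a} with hI
  have hIle : I ≤ maximalIdeal R := by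
    rw [hI, Ideal.span_le]
    rintro x hx
    rcases hx with h | h
    · simpa [h] using hpm
    · simp at h; rw [h]; exact ha
  have hIfg : I.FG := Submodule.fg_span (Set.toFinite _)
  obtain ⟨N, hN⟩ : ∃ n : ℕ, I ^ n ≤ ⊥ := by
    apply Ideal.exists_pow_le_of_le_radical_of_fg _ hIfg
    exact (hIle.trans hmn)
  -- apply the key lemma with e = N
  have haI : a ∈ I := Ideal.subset_span (by simp)
  have hpI : (p : R) ∈ I := Ideal.subset_span (by simp)
  obtain ⟨b, hb, hab⟩ := key_pow hp haI hpI N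
  have hb0 : b = 0 := by
    have : b ∈ (⊥ : Ideal R) := (Ideal.pow_le_pow_right (Nat.le_succ N)).trans hN hb
    simpa using this
  have hu : ((u : R) ^ m) ^ p ^ N = 1 := by
    have : (u : R) ^ m = 1 + a := by rw [ha_def]; ring
    rw [this, hab, hb0, add_zero]
  refine ⟨m * p ^ N, Nat.mul_pos hm (pow_pos hp.pos N), ?_⟩
  ext
  push_cast [Units.val_pow_eq_pow_val]
  rw [pow_mul]
  exact hu
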